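/- For every nonnegative integer n, the partial sum S(n) = ∑_{m=0}^{n} σ_0(m) of the pentagonal number theorem sequence takes only the values -1, 0, 1. Specifically, for each k ≥ 0: S(n) = 1 when 6k² + k ≤ n < 6k² + 5k + 1; S(n) = -1 when 6k² + 7k + 2 ≤ n < 6k² + 11k + 5; and S(n) = 0 when 6k² - k ≤ n < 6k² + k or 6k² + 5k + 1 ≤ n < 6k² + 7k + 2. -/

import Mathlib

/-- Coefficient of `x^n` in Euler's product `∏_{m ≥ 1} (1 - x^m)` (the pentagonal
number theorem sequence); factors with `m > n` do not affect this coefficient, so the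
product may be truncated at `m = n`. -/
noncomputable def sigma0 (n : ℕ) : ℤ :=
  PowerSeries.coeff (R := ℤ) n (∏ m ∈ Finset.Icc 1 n, (1 - PowerSeries.X ^ m))

/-- Coefficient of `x^n` in `∏_{m ≥ 1, m ≠ j} (1 - x^m)` (the `j`-laced sequence);
for `j = 0` this is the full Euler product. -/
noncomputable def sigmaJ (j n : ℕ) : ℤ :=
  PowerSeries.coeff (R := ℤ) n (∏ m ∈ (Finset.Icc 1 n).erase j, (1 - PowerSeries.X ^ m))

/-- `ρ(0) = 1`, and for `n ≥ 1`, `ρ(n)` is the number of positive divisors of `n`. -/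
def rho (n : ℕ) : ℤ := if n = 0 then 1 else (n.divisors.card : ℤ)

/-- Integer-indexed `ρ`, vanishing on negative arguments. -/
def rhoZ (m : ℤ) : ℤ := if 0 ≤ m then rho m.toNat else 0

/-- The σ-sequence: `σ(n) = ∑_{j=0}^{n} σ_j(n - j)`, the coefficient of `x^n` in the
σ-function `∑_{h ≥ 0} x^h ∏_{m ≥ 1, m ≠ h} (1 - x^m)`. -/
noncomputable def sigmaSeq (n : ℕ) : ℤ := ∑ j ∈ Finset.range (n+1), sigmaJ j (n - j)

/-- Partial sums of the pentagonal number theorem sequence. -/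
noncomputable def S (n : ℕ) : ℤ := ∑ m ∈ Finset.range (n+1), sigma0 m

section Aux
open Finset

/-- max of a finset of naturals, 0 for empty -/
def Mx (A : Finset ℕ) : ℕ := WithBot.unbotD 0 A.max
/-- min of a finset of naturals, 0 for empty -/
def mnn (A : Finset ℕ) : ℕ := WithTop.untopD 0 A.min
/-- bottom of the top staircase -/
noncomputable def uu (A : Finset ℕ) : ℕ := sInf {x | x ∈ A ∧ Finset.Icc x (Mx A) ⊆ A}

def isExc (A : Finset ℕ) : Prop :=
  A = Finset.Icc (mnn A) (Mx A) ∧ (Mx A + 1 = 2 * mnn A ∨ Mx A + 2 = 2 * mnn A)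

noncomputable def phi (A : Finset ℕ) : Finset ℕ :=
  if mnn A ≤ Mx A - uu A + 1 then
    insert (Mx A + 1) ((A.erase (mnn A)).erase (Mx A - mnn A + 1))
  else
    insert (Mx A - uu A + 1) (insert (uu A - 1) (A.erase (Mx A)))

variable {A : Finset ℕ}

lemma Mx_mem (h : A.Nonempty) : Mx A ∈ A := by
  have := A.max'_mem h
  rwa [Mx, ← A.coe_max' h, WithBot.unbotD_coe]

lemma le_Mx (hx : x ∈ A) : x ≤ Mx A := by
  have h : A.Nonempty := ⟨x, hx⟩
  rw [Mx, ← A.coe_max' h, WithBot.unbotD_coe]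
  exact A.le_max' x hx

lemma mnn_mem (h : A.Nonempty) : mnn A ∈ A := by
  have := A.min'_mem h
  rwa [mnn, ← A.coe_min' h, WithTop.untopD_coe]

lemma mnn_le (hx : x ∈ A) : mnn A ≤ x := by
  have h : A.Nonempty := ⟨x, hx⟩
  rw [mnn, ← A.coe_min' h, WithTop.untopD_coe]
  exact A.min'_le x hx

lemma uu_spec (h : A.Nonempty) : uu A ∈ A ∧ Finset.Icc (uu A) (Mx A) ⊆ A := by
  have : Mx A ∈ {x | x ∈ A ∧ Finset.Icc x (Mx A) ⊆ A} := by
    refine ⟨Mx_mem h, ?_⟩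
    intro y hy
    rw [mem_Icc] at hy
    have : y = Mx A := le_antisymm hy.2 hy.1
    rw [this]; exact Mx_mem h
  exact Nat.sInf_mem ⟨Mx A, this⟩

lemma uu_min (hx : x ∈ A) (hs : Finset.Icc x (Mx A) ⊆ A) : uu A ≤ x :=
  Nat.sInf_le ⟨hx, hs⟩

lemma uu_pred_not_mem (h : A.Nonempty) (h0 : 0 ∉ A) : uu A - 1 ∉ A := by
  intro hc
  have h1 : 1 ≤ uu A := Nat.one_le_iff_ne_zero.2 (fun hz => h0 (hz ▸ (uu_spec h).1))
  have h2 : Finset.Icc (uu A - 1) (Mx A) ⊆ A := by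
    intro y hy
    rw [mem_Icc] at hy
    rcases eq_or_lt_of_le hy.1 with h3 | h3
    · rwa [← h3]
    · exact (uu_spec h).2 (mem_Icc.2 ⟨by omega, hy.2⟩)
  have := uu_min hc h2
  omega

lemma Mx_eq (hx : x ∈ A) (h : ∀ y ∈ A, y ≤ x) : Mx A = x :=
  le_antisymm (h _ (Mx_mem ⟨x, hx⟩)) (le_Mx hx)

lemma mnn_eq (hx : x ∈ A) (h : ∀ y ∈ A, x ≤ y) : mnn A = x :=
  le_antisymm (mnn_le hx) (h _ (mnn_mem ⟨x, hx⟩))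

lemma uu_eq (hx : x ∈ A) (hs : Finset.Icc x (Mx A) ⊆ A)
    (hmin : ∀ y, y ∈ A → Finset.Icc y (Mx A) ⊆ A → x ≤ y) : uu A = x := by
  have h1 := uu_min hx hs
  have h2 := hmin _ (uu_spec ⟨x, hx⟩).1 (uu_spec ⟨x, hx⟩).2
  omega

lemma up_lemma (hA : A.Nonempty) (h0 : 0 ∉ A) (hexc : ¬ isExc A)
    (hbr : mnn A ≤ Mx A - uu A + 1) :
    (phi A).sum id = A.sum id ∧ (phi A).Nonempty ∧ 0 ∉ phi A ∧ ¬ isExc (phi A) ∧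
    phi (phi A) = A ∧ (phi A).card + 1 = A.card := by
  set s := mnn A with hs_def
  set M := Mx A with hM_def
  set u := uu A with hu_def
  have hsu : s ≤ u := mnn_le (uu_spec hA).1
  have huM : u ≤ M := le_Mx (uu_spec hA).1
  have hs1 : 1 ≤ s := by
    have := mnn_mem hA
    rcases Nat.eq_zero_or_pos s with h | h
    · exact absurd (h ▸ this) h0
    · exact h
  have hstair := (uu_spec hA).2
  have hAsub : A ⊆ Finset.Icc s M := fun x hx => mem_Icc.2 ⟨mnn_le hx, le_Mx hx⟩
  have hU2 : 2 * s ≤ M := by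
    by_contra hc
    push_neg at hc
    have hu_eq : u = s := le_antisymm (by omega) hsu
    apply hexc
    constructor
    · apply Finset.Subset.antisymm hAsub
      intro x hx
      apply hstair
      rw [mem_Icc] at hx ⊢
      omega
    · left; omega
  have hst : Finset.Icc (M - s + 1) M ⊆ A := by
    refine Finset.Subset.trans (Finset.Icc_subset_Icc_left ?_) hstair
    omega
  have hmem1 : M - s + 1 ∈ A := hst (mem_Icc.2 ⟨le_refl _, by omega⟩)
  have hsmem : s ∈ A := mnn_mem hA
  have hne1 : s ≠ M - s + 1 := by omega
  set B := (A.erase s).erase (M - s + 1) with hB_def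
  have hmemB : ∀ x, x ∈ B ↔ x ∈ A ∧ x ≠ s ∧ x ≠ M - s + 1 := by
    intro x
    simp only [hB_def, Finset.mem_erase]
    tauto
  have hMB : M + 1 ∉ B := by
    intro hc
    have := le_Mx ((hmemB _).1 hc).1
    omega
  have hphiA : phi A = insert (M + 1) B := by
    rw [phi, if_pos hbr]
  have hmemA' : ∀ x, x ∈ phi A ↔ x = M + 1 ∨ (x ∈ A ∧ x ≠ s ∧ x ≠ M - s + 1) := by
    intro x
    rw [hphiA]
    simp only [Finset.mem_insert, hmemB]
  have hmem1' : M - s + 1 ∈ A.erase s := Finset.mem_erase.2 ⟨Ne.symm hne1, hmem1⟩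
  -- sum
  have hsum : (phi A).sum id = A.sum id := by
    have e1 := Finset.add_sum_erase _ id hsmem
    have e2 := Finset.add_sum_erase _ id hmem1'
    rw [hphiA, Finset.sum_insert hMB]
    rw [← hB_def] at e2
    simp only [id] at e1 e2 ⊢
    omega
  -- card
  have hcard : (phi A).card + 1 = A.card := by
    rw [hphiA, Finset.card_insert_of_notMem hMB, hB_def,
      Finset.card_erase_of_mem hmem1', Finset.card_erase_of_mem hsmem]
    have : 2 ≤ A.card := Finset.one_lt_card.2 ⟨s, hsmem, M - s + 1, hmem1, hne1⟩
    omega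
  -- phi A facts
  have hA'ne : (phi A).Nonempty := ⟨M + 1, (hmemA' _).2 (Or.inl rfl)⟩
  have h0' : 0 ∉ phi A := by
    intro hc
    rcases (hmemA' _).1 hc with h | h
    · omega
    · exact h0 h.1
  have hMx' : Mx (phi A) = M + 1 := by
    apply Mx_eq ((hmemA' _).2 (Or.inl rfl))
    intro y hy
    rcases (hmemA' _).1 hy with h | h
    · omega
    · have := le_Mx h.1; omega
  have hmnn' : s + 1 ≤ mnn (phi A) := by
    have hm := mnn_mem hA'ne
    rcases (hmemA' _).1 hm with h | h
    · omega
    · have := mnn_le h.1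
      have h2 : s ≤ mnn (phi A) := by rw [hs_def]; exact mnn_le h.1
      omega
  have hnotmem1' : M - s + 1 ∉ phi A := by
    intro hc
    rcases (hmemA' _).1 hc with h | h
    · omega
    · exact h.2.2 rfl
  have huu' : uu (phi A) = M - s + 2 := by
    apply uu_eq
    · rcases Nat.lt_or_ge (M - s + 2) (M + 1) with h | h
      · exact (hmemA' _).2 (Or.inr ⟨hst (mem_Icc.2 ⟨by omega, by omega⟩), by omega, by omega⟩)
      · have : M - s + 2 = M + 1 := by omega
        exact (hmemA' _).2 (Or.inl this)
    · rw [hMx']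
      intro y hy
      rw [mem_Icc] at hy
      rcases Nat.lt_or_ge y (M + 1) with h | h
      · exact (hmemA' _).2 (Or.inr ⟨hst (mem_Icc.2 ⟨by omega, by omega⟩), by omega, by omega⟩)
      · exact (hmemA' _).2 (Or.inl (by omega))
    · rw [hMx']
      intro y hy hsub
      by_contra hc
      push_neg at hc
      have : M - s + 1 ∈ phi A := hsub (mem_Icc.2 ⟨by omega, by omega⟩)
      exact hnotmem1' this
  have hbr' : ¬ (mnn (phi A) ≤ Mx (phi A) - uu (phi A) + 1) := by
    rw [hMx', huu']
    omega
  -- not exceptional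
  have hexc' : ¬ isExc (phi A) := by
    rintro ⟨hshape, hcond⟩
    have hm' : mnn (phi A) = M - s + 2 := by
      have h1 : mnn (phi A) ≤ M - s + 2 := by
        apply mnn_le
        rcases Nat.lt_or_ge (M - s + 2) (M + 1) with h | h
        · exact (hmemA' _).2 (Or.inr ⟨hst (mem_Icc.2 ⟨by omega, by omega⟩), by omega, by omega⟩)
        · exact (hmemA' _).2 (Or.inl (by omega))
      have h2 : ¬ (mnn (phi A) ≤ M - s + 1) := by
        intro h2
        apply hnotmem1'
        rw [hshape]
        rw [hMx'] at *
        exact mem_Icc.2 ⟨h2, by omega⟩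
      omega
    rw [hMx', hm'] at hcond
    omega
  -- involution
  have hinv : phi (phi A) = A := by
    rw [phi, if_neg hbr', hMx', huu']
    have h1 : (M+1) - (M-s+2) + 1 = s := by omega
    have h2 : (M-s+2) - 1 = M - s + 1 := by omega
    rw [h1, h2, hphiA, Finset.erase_insert hMB]
    ext x
    simp only [Finset.mem_insert, hmemB]
    constructor
    · rintro (rfl | rfl | h)
      exacts [hsmem, hmem1, h.1]
    · intro hx
      rcases eq_or_ne x s with rfl | hxs
      · exact Or.inl rfl
      rcases eq_or_ne x (M - s + 1) with rfl | hx1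
      · exact Or.inr (Or.inl rfl)
      · exact Or.inr (Or.inr ⟨hx, hxs, hx1⟩)
  exact ⟨hsum, hA'ne, h0', hexc', hinv, hcard⟩

lemma down_lemma (hA : A.Nonempty) (h0 : 0 ∉ A) (hexc : ¬ isExc A)
    (hbr : ¬ (mnn A ≤ Mx A - uu A + 1)) :
    (phi A).sum id = A.sum id ∧ (phi A).Nonempty ∧ 0 ∉ phi A ∧ ¬ isExc (phi A) ∧
    phi (phi A) = A ∧ (phi A).card = A.card + 1 := by
  push_neg at hbr
  set s := mnn A with hs_def
  set M := Mx A with hM_def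
  set u := uu A with hu_def
  set t := M - u + 1 with ht_def
  have hsu : s ≤ u := mnn_le (uu_spec hA).1
  have huM : u ≤ M := le_Mx (uu_spec hA).1
  have hs1 : 1 ≤ s := by
    have := mnn_mem hA
    rcases Nat.eq_zero_or_pos s with h | h
    · exact absurd (h ▸ this) h0
    · exact h
  have hstair := (uu_spec hA).2
  have hup : u - 1 ∉ A := uu_pred_not_mem hA h0
  have hAsub : A ⊆ Finset.Icc s M := fun x hx => mem_Icc.2 ⟨mnn_le hx, le_Mx hx⟩
  have hsmem : s ∈ A := mnn_mem hA
  have hMmem : M ∈ A := Mx_mem hA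
  have hts : t < s := by omega
  -- D1 : t + 2 ≤ u
  have hD1 : t + 2 ≤ u := by
    rcases Nat.lt_or_ge s u with h | h
    · -- s < u, and s ≠ u - 1 since u - 1 ∉ A
      have : s ≠ u - 1 := fun hc => hup (hc ▸ hsmem)
      omega
    · have hsu_eq : s = u := by omega
      have hfull : A = Finset.Icc s M := by
        apply Finset.Subset.antisymm hAsub
        intro x hx
        apply hstair
        rw [mem_Icc] at hx ⊢
        omega
      have hcond : ¬ (M + 1 = 2 * s ∨ M + 2 = 2 * s) := fun hc => hexc ⟨hfull, hc⟩
      omega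
  have htA : t ∉ A := fun hc => by have := mnn_le hc; omega
  set B := A.erase M with hB_def
  have hu1notB : u - 1 ∉ B := fun hc => hup (Finset.mem_of_mem_erase hc)
  have htnot : t ∉ insert (u - 1) B := by
    intro hc
    rcases Finset.mem_insert.1 hc with h | h
    · omega
    · exact htA (Finset.mem_of_mem_erase h)
  have hphiA : phi A = insert t (insert (u - 1) B) := by
    rw [phi, if_neg (by omega)]
  have hmemA' : ∀ x, x ∈ phi A ↔ x = t ∨ x = u - 1 ∨ (x ∈ A ∧ x ≠ M) := by
    intro x
    rw [hphiA]
    simp only [Finset.mem_insert, hB_def, Finset.mem_erase]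
    tauto
  -- sum
  have hsum : (phi A).sum id = A.sum id := by
    have e1 := Finset.add_sum_erase _ id hMmem
    rw [hphiA, Finset.sum_insert htnot, Finset.sum_insert hu1notB]
    rw [← hB_def] at e1
    simp only [id] at e1 ⊢
    omega
  -- card
  have hcard : (phi A).card = A.card + 1 := by
    rw [hphiA, Finset.card_insert_of_notMem htnot, Finset.card_insert_of_notMem hu1notB,
      hB_def, Finset.card_erase_of_mem hMmem]
    have : 1 ≤ A.card := Finset.card_pos.2 hA
    omega
  have hA'ne : (phi A).Nonempty := ⟨t, (hmemA' _).2 (Or.inl rfl)⟩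
  have h0' : 0 ∉ phi A := by
    intro hc
    rcases (hmemA' _).1 hc with h | h | h
    · omega
    · omega
    · exact h0 h.1
  have hMx' : Mx (phi A) = M - 1 := by
    apply Mx_eq
    · rcases Nat.lt_or_ge (u - 1) (M - 1) with h | h
      · exact (hmemA' _).2 (Or.inr (Or.inr ⟨hstair (mem_Icc.2 ⟨by omega, by omega⟩), by omega⟩))
      · exact (hmemA' _).2 (Or.inr (Or.inl (by omega)))
    · intro y hy
      rcases (hmemA' _).1 hy with h | h | h
      · omega
      · omega
      · have := le_Mx h.1; omega
  have hmnn' : mnn (phi A) = t := by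
    apply mnn_eq ((hmemA' _).2 (Or.inl rfl))
    intro y hy
    rcases (hmemA' _).1 hy with h | h | h
    · omega
    · omega
    · have := mnn_le h.1; omega
  have huu' : uu (phi A) ≤ u - 1 := by
    apply uu_min
    · exact (hmemA' _).2 (Or.inr (Or.inl rfl))
    · rw [hMx']
      intro y hy
      rw [mem_Icc] at hy
      rcases Nat.lt_or_ge y u with h | h
      · exact (hmemA' _).2 (Or.inr (Or.inl (by omega)))
      · exact (hmemA' _).2 (Or.inr (Or.inr ⟨hstair (mem_Icc.2 ⟨by omega, by omega⟩), by omega⟩))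
  have hbr' : mnn (phi A) ≤ Mx (phi A) - uu (phi A) + 1 := by
    rw [hMx', hmnn']
    omega
  have hexc' : ¬ isExc (phi A) := by
    rintro ⟨hshape, hcond⟩
    rw [hMx', hmnn'] at hcond
    have hu1mem : u - 1 ∈ phi A := (hmemA' _).2 (Or.inr (Or.inl rfl))
    have := mnn_le hu1mem
    rw [hmnn'] at this
    omega
  have hinv : phi (phi A) = A := by
    rw [phi, if_pos hbr', hMx', hmnn']
    have h1 : M - 1 + 1 = M := by omega
    have h2 : M - 1 - t + 1 = u - 1 := by omega
    rw [h1, h2, hphiA, Finset.erase_insert htnot, Finset.erase_insert hu1notB, hB_def,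
      Finset.insert_erase hMmem]
  exact ⟨hsum, hA'ne, h0', hexc', hinv, hcard⟩

lemma phi_good (hA : A.Nonempty) (h0 : 0 ∉ A) (hexc : ¬ isExc A) :
    (phi A).sum id = A.sum id ∧ (phi A).Nonempty ∧ 0 ∉ phi A ∧ ¬ isExc (phi A) ∧
    phi (phi A) = A ∧ ((-1 : ℤ)^(phi A).card = -(-1)^A.card) := by
  by_cases hbr : mnn A ≤ Mx A - uu A + 1
  · obtain ⟨h1, h2, h3, h4, h5, h6⟩ := up_lemma hA h0 hexc hbr
    refine ⟨h1, h2, h3, h4, h5, ?_⟩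
    rw [← h6, pow_succ]
    ring
  · obtain ⟨h1, h2, h3, h4, h5, h6⟩ := down_lemma hA h0 hexc hbr
    refine ⟨h1, h2, h3, h4, h5, ?_⟩
    rw [h6, pow_succ]
    ring

/-- Gauss sum for Icc -/
lemma gauss_Icc (a m : ℕ) : (∑ x ∈ Finset.Icc a (a + m), x) * 2 = (2*a + m) * (m + 1) := by
  have h1 : Finset.Icc a (a + m) = Finset.Ico a (a + m + 1) := by
    rw [Finset.Ico_add_one_right_eq_Icc]
  rw [h1, Finset.sum_Ico_eq_sum_range]
  have h2 : a + m + 1 - a = m + 1 := by omega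
  rw [h2]
  have h3 : ∀ i ∈ Finset.range (m+1), a + i = a + i := fun _ _ => rfl
  rw [Finset.sum_add_distrib, Finset.sum_const, Finset.card_range, smul_eq_mul]
  have h4 := Finset.sum_range_id_mul_two (m+1)
  simp only [Nat.add_sub_cancel] at h4
  ring_nf
  ring_nf at h4
  omega

lemma mem_le_sum {x : ℕ} (hx : x ∈ A) : x ≤ A.sum id :=
  Finset.single_le_sum (f := id) (fun _ _ => Nat.zero_le _) hx

lemma pent_inj1 {n j k : ℕ} (hj : 1 ≤ j) (hk : 1 ≤ k)
    (h1 : 2*n + j = 3*j*j) (h2 : 2*n + k = 3*k*k) : j = k := by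
  rcases Nat.lt_or_ge j k with h | h
  · nlinarith [Nat.mul_le_mul (show j+1 ≤ k by omega) (le_refl k),
      Nat.mul_le_mul (le_refl j) (show j ≤ k by omega)]
  rcases Nat.lt_or_ge k j with h' | h'
  · nlinarith [Nat.mul_le_mul (show k+1 ≤ j by omega) (le_refl j),
      Nat.mul_le_mul (le_refl k) (show k ≤ j by omega)]
  omega

lemma pent_inj2 {n j k : ℕ} (hj : 1 ≤ j) (hk : 1 ≤ k)
    (h1 : 2*n + j = 3*j*j) (h2 : 2*n = 3*k*k + k) : False := by
  rcases Nat.lt_or_ge j k with h | h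
  · nlinarith [Nat.mul_le_mul (show j+1 ≤ k by omega) (le_refl k),
      Nat.mul_le_mul (le_refl j) (show j ≤ k by omega)]
  rcases Nat.lt_or_ge k j with h' | h'
  · nlinarith [Nat.mul_le_mul (show k+1 ≤ j by omega) (le_refl j),
      Nat.mul_le_mul (le_refl k) (show k ≤ j by omega)]
  · have hjk : j = k := by omega
    subst hjk
    omega

lemma pent_inj3 {n j k : ℕ} (hj : 1 ≤ j) (hk : 1 ≤ k)
    (h1 : 2*n = 3*j*j + j) (h2 : 2*n = 3*k*k + k) : j = k := by
  rcases Nat.lt_or_ge j k with h | h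
  · nlinarith [Nat.mul_le_mul (show j+1 ≤ k by omega) (le_refl k),
      Nat.mul_le_mul (le_refl j) (show j ≤ k by omega)]
  rcases Nat.lt_or_ge k j with h' | h'
  · nlinarith [Nat.mul_le_mul (show k+1 ≤ j by omega) (le_refl j),
      Nat.mul_le_mul (le_refl k) (show k ≤ j by omega)]
  omega

/-- classification of exceptional sets in `D n` -/
lemma exc_classify {n : ℕ} (hn : 1 ≤ n) (hsub : A ⊆ Finset.Icc 1 n) (hsum : A.sum id = n)
    (hexc : isExc A) :
    ∃ k, 1 ≤ k ∧ ((2*n + k = 3*k*k ∧ A = Finset.Icc k (2*k-1)) ∨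
      (2*n = 3*k*k + k ∧ A = Finset.Icc (k+1) (2*k))) := by
  obtain ⟨hshape, hcond⟩ := hexc
  have hAne : A.Nonempty := by
    rcases Finset.eq_empty_or_nonempty A with rfl | h
    · simp at hsum; omega
    · exact h
  set s := mnn A with hs_def
  set M := Mx A with hM_def
  have hsM : s ≤ M := le_Mx (mnn_mem hAne)
  have hs1 : 1 ≤ s := by
    have := hsub (mnn_mem hAne)
    rw [mem_Icc] at this
    exact this.1
  have hsum2 : n * 2 = (2*s + (M - s)) * ((M - s) + 1) := by
    have := gauss_Icc s (M - s)
    have hMs : s + (M - s) = M := by omega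
    rw [hMs] at this
    rw [← hsum, hshape]
    rw [← hM_def, ← hs_def] at *
    simpa using this
  rcases hcond with hc | hc
  · refine ⟨s, hs1, Or.inl ⟨?_, ?_⟩⟩
    · have h4 : M - s = s - 1 := by omega
      have h5 : s - 1 + 1 = s := by omega
      rw [h4, h5] at hsum2
      have h7 : (2*s + (s-1)) * s + s = 3*s*s := by
        have h6 : 2*s + (s-1) + 1 = 3*s := by omega
        calc (2*s + (s-1))*s + s = (2*s + (s-1) + 1) * s := by ring
        _ = 3*s*s := by rw [h6]
      omega
    · rw [hshape]
      congr 1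
      omega
  · have hs2 : 2 ≤ s := by omega
    refine ⟨s - 1, by omega, Or.inr ⟨?_, ?_⟩⟩
    · have h4 : M - s = s - 2 := by omega
      have h5 : s - 2 + 1 = s - 1 := by omega
      rw [h4, h5] at hsum2
      have h7 : (2*s + (s-2)) * (s-1) = 3*(s-1)*(s-1) + (s-1) := by
        have h6 : 2*s + (s-2) = 3*(s-1) + 1 := by omega
        calc (2*s + (s-2))*(s-1) = (3*(s-1) + 1) * (s-1) := by rw [h6]
        _ = 3*(s-1)*(s-1) + (s-1) := by ring
      omega
    · rw [hshape]
      congr 1 <;> omega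

lemma sigma0_eq_sum (n : ℕ) :
    sigma0 n = ∑ A ∈ ((Icc 1 n).powerset.filter (fun A => A.sum id = n)), (-1 : ℤ)^A.card := by
  unfold sigma0
  have h1 : ∀ m : ℕ, (1 - PowerSeries.X ^ m : PowerSeries ℤ) = (-PowerSeries.X ^ m) + 1 := by
    intro m; ring
  simp_rw [h1]
  rw [Finset.prod_add]
  rw [map_sum]
  rw [Finset.sum_filter]
  apply Finset.sum_congr rfl
  intro A hA
  rw [prod_const_one, mul_one]
  have h2 : (∏ i ∈ A, (-PowerSeries.X ^ i) : PowerSeries ℤ)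
      = PowerSeries.C (R := ℤ) ((-1)^A.card) * PowerSeries.X ^ (A.sum id) := by
    rw [← prod_pow_eq_pow_sum]
    rw [← Finset.prod_const (-1 : ℤ), map_prod, ← Finset.prod_mul_distrib]
    apply Finset.prod_congr rfl
    intro i _
    simp [neg_mul]
  rw [h2, PowerSeries.coeff_C_mul, PowerSeries.coeff_X_pow]
  rw [mul_ite, mul_one, mul_zero]
  simp only [eq_comm]

lemma D_basic {n : ℕ} (hn : 1 ≤ n) (hsub : A ⊆ Finset.Icc 1 n) (hsum : A.sum id = n) :
    A.Nonempty ∧ 0 ∉ A := by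
  constructor
  · rcases Finset.eq_empty_or_nonempty A with rfl | h
    · simp at hsum; omega
    · exact h
  · intro hc
    have := hsub hc
    rw [mem_Icc] at this
    omega

/-- Key involution computation: if `E` is the unique exceptional set (or there are none),
the signed sum collapses. -/
lemma sigma0_exc {n k : ℕ} (hn : 1 ≤ n) (E : Finset ℕ)
    (hEsub : E ⊆ Finset.Icc 1 n) (hEsum : E.sum id = n) (hEexc : isExc E)
    (hEcard : E.card = k)
    (huniq : ∀ B, B ⊆ Finset.Icc 1 n → B.sum id = n → isExc B → B = E) :
    sigma0 n = (-1)^k := by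
  rw [sigma0_eq_sum]
  set s := (Icc 1 n).powerset.filter (fun A => A.sum id = n) with hs_def
  have hmem_s : ∀ B, B ∈ s ↔ B ⊆ Finset.Icc 1 n ∧ B.sum id = n := by
    intro B; simp [hs_def]
  have hEmem : E ∈ s := (hmem_s E).2 ⟨hEsub, hEsum⟩
  rw [← Finset.add_sum_erase s _ hEmem, hEcard]
  have hzero : ∑ B ∈ s.erase E, (-1 : ℤ)^B.card = 0 := by
    apply Finset.sum_involution (g := fun B _ => phi B)
    · intro B hB
      obtain ⟨hBsub, hBsum⟩ := (hmem_s B).1 (Finset.mem_of_mem_erase hB)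
      have hBne := (Finset.mem_erase.1 hB).1
      obtain ⟨hne, h0⟩ := D_basic hn hBsub hBsum
      have hexc : ¬ isExc B := fun hc => hBne (huniq B hBsub hBsum hc)
      obtain ⟨_, _, _, _, _, hsign⟩ := phi_good hne h0 hexc
      rw [hsign]; ring
    · intro B hB hf
      obtain ⟨hBsub, hBsum⟩ := (hmem_s B).1 (Finset.mem_of_mem_erase hB)
      have hBne := (Finset.mem_erase.1 hB).1
      obtain ⟨hne, h0⟩ := D_basic hn hBsub hBsum
      have hexc : ¬ isExc B := fun hc => hBne (huniq B hBsub hBsum hc)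
      obtain ⟨_, _, _, _, _, hsign⟩ := phi_good hne h0 hexc
      intro hc
      rw [hc] at hsign
      have h1 : ((-1 : ℤ))^B.card ≠ 0 := pow_ne_zero _ (by norm_num)
      omega
    · intro B hB
      obtain ⟨hBsub, hBsum⟩ := (hmem_s B).1 (Finset.mem_of_mem_erase hB)
      have hBne := (Finset.mem_erase.1 hB).1
      obtain ⟨hne, h0⟩ := D_basic hn hBsub hBsum
      have hexc : ¬ isExc B := fun hc => hBne (huniq B hBsub hBsum hc)
      obtain ⟨hsum', hne', h0', hexc', hinv, hsign⟩ := phi_good hne h0 hexc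
      rw [Finset.mem_erase]
      constructor
      · intro hc
        rw [hc] at hexc'
        exact hexc' hEexc
      · rw [hmem_s]
        refine ⟨?_, by rw [hsum', hBsum]⟩
        intro x hx
        rw [mem_Icc]
        refine ⟨?_, ?_⟩
        · rcases Nat.eq_zero_or_pos x with rfl | h
          · exact absurd hx h0'
          · exact h
        · have := mem_le_sum hx
          rw [hsum', hBsum] at this
          exact this
    · intro B hB
      obtain ⟨hBsub, hBsum⟩ := (hmem_s B).1 (Finset.mem_of_mem_erase hB)
      have hBne := (Finset.mem_erase.1 hB).1
      obtain ⟨hne, h0⟩ := D_basic hn hBsub hBsum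
      have hexc : ¬ isExc B := fun hc => hBne (huniq B hBsub hBsum hc)
      exact (phi_good hne h0 hexc).2.2.2.2.1
  rw [hzero, add_zero]

lemma sigma0_zero' {n : ℕ} (hn : 1 ≤ n)
    (hnone : ∀ B, B ⊆ Finset.Icc 1 n → B.sum id = n → ¬ isExc B) :
    sigma0 n = 0 := by
  rw [sigma0_eq_sum]
  set s := (Icc 1 n).powerset.filter (fun A => A.sum id = n) with hs_def
  have hmem_s : ∀ B, B ∈ s ↔ B ⊆ Finset.Icc 1 n ∧ B.sum id = n := by
    intro B; simp [hs_def]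
  apply Finset.sum_involution (g := fun B _ => phi B)
  · intro B hB
    obtain ⟨hBsub, hBsum⟩ := (hmem_s B).1 hB
    obtain ⟨hne, h0⟩ := D_basic hn hBsub hBsum
    obtain ⟨_, _, _, _, _, hsign⟩ := phi_good hne h0 (hnone B hBsub hBsum)
    rw [hsign]; ring
  · intro B hB hf
    obtain ⟨hBsub, hBsum⟩ := (hmem_s B).1 hB
    obtain ⟨hne, h0⟩ := D_basic hn hBsub hBsum
    obtain ⟨_, _, _, _, _, hsign⟩ := phi_good hne h0 (hnone B hBsub hBsum)
    intro hc
    rw [hc] at hsign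
    have h1 : ((-1 : ℤ))^B.card ≠ 0 := pow_ne_zero _ (by norm_num)
    omega
  · intro B hB
    obtain ⟨hBsub, hBsum⟩ := (hmem_s B).1 hB
    obtain ⟨hne, h0⟩ := D_basic hn hBsub hBsum
    obtain ⟨hsum', hne', h0', hexc', hinv, hsign⟩ := phi_good hne h0 (hnone B hBsub hBsum)
    rw [hmem_s]
    refine ⟨?_, by rw [hsum', hBsum]⟩
    intro x hx
    rw [mem_Icc]
    refine ⟨?_, ?_⟩
    · rcases Nat.eq_zero_or_pos x with rfl | h
      · exact absurd hx h0'
      · exact h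
    · have := mem_le_sum hx
      rw [hsum', hBsum] at this
      exact this
  · intro B hB
    obtain ⟨hBsub, hBsum⟩ := (hmem_s B).1 hB
    obtain ⟨hne, h0⟩ := D_basic hn hBsub hBsum
    exact (phi_good hne h0 (hnone B hBsub hBsum)).2.2.2.2.1

/-- facts about the exceptional set `Icc k (2k-1)` -/
lemma E1_facts {n k : ℕ} (hk : 1 ≤ k) (h : 2*n + k = 3*k*k) :
    Finset.Icc k (2*k-1) ⊆ Finset.Icc 1 n ∧ (Finset.Icc k (2*k-1)).sum id = n ∧
    isExc (Finset.Icc k (2*k-1)) ∧ (Finset.Icc k (2*k-1)).card = k := by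
  have hkk : k ≤ k*k := Nat.le_mul_of_pos_left k hk
  have h2kn : 2*k-1 ≤ n := by
    have : 2*k ≤ n + 1 := by
      rcases Nat.lt_or_ge k 2 with hc | hc
      · interval_cases k <;> omega
      · nlinarith [Nat.mul_le_mul hc (le_refl k)]
    omega
  have hmnn : mnn (Finset.Icc k (2*k-1)) = k := by
    apply mnn_eq (mem_Icc.2 ⟨le_refl _, by omega⟩)
    intro y hy
    exact (mem_Icc.1 hy).1
  have hMx : Mx (Finset.Icc k (2*k-1)) = 2*k-1 := by
    apply Mx_eq (mem_Icc.2 ⟨by omega, le_refl _⟩)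
    intro y hy
    exact (mem_Icc.1 hy).2
  have hsum : (Finset.Icc k (2*k-1)).sum id = n := by
    have hg := gauss_Icc k (k-1)
    have he : k + (k-1) = 2*k-1 := by omega
    rw [he] at hg
    have h7 : (2*k + (k-1)) * (k-1+1) + k = 3*k*k := by
      have h6 : 2*k + (k-1) + 1 = 3*k := by omega
      have h5 : k - 1 + 1 = k := by omega
      calc (2*k + (k-1))*(k-1+1) + k = (2*k + (k-1)) * k + k := by rw [h5]
      _ = (2*k + (k-1) + 1) * k := by ring
      _ = 3*k*k := by rw [h6]
    simp only [id] at hg ⊢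
    omega
  refine ⟨?_, hsum, ⟨?_, ?_⟩, ?_⟩
  · intro x hx
    rw [mem_Icc] at hx ⊢
    omega
  · rw [hmnn, hMx]
  · left; rw [hmnn, hMx]; omega
  · rw [Nat.card_Icc]; omega

/-- facts about the exceptional set `Icc (k+1) (2k)` -/
lemma E2_facts {n k : ℕ} (hk : 1 ≤ k) (h : 2*n = 3*k*k + k) :
    Finset.Icc (k+1) (2*k) ⊆ Finset.Icc 1 n ∧ (Finset.Icc (k+1) (2*k)).sum id = n ∧
    isExc (Finset.Icc (k+1) (2*k)) ∧ (Finset.Icc (k+1) (2*k)).card = k := by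
  have hkk : k ≤ k*k := Nat.le_mul_of_pos_left k hk
  have h2kn : 2*k ≤ n := by nlinarith
  have hmnn : mnn (Finset.Icc (k+1) (2*k)) = k+1 := by
    apply mnn_eq (mem_Icc.2 ⟨le_refl _, by omega⟩)
    intro y hy
    exact (mem_Icc.1 hy).1
  have hMx : Mx (Finset.Icc (k+1) (2*k)) = 2*k := by
    apply Mx_eq (mem_Icc.2 ⟨by omega, le_refl _⟩)
    intro y hy
    exact (mem_Icc.1 hy).2
  have hsum : (Finset.Icc (k+1) (2*k)).sum id = n := by
    have hg := gauss_Icc (k+1) (k-1)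
    have he : k + 1 + (k-1) = 2*k := by omega
    rw [he] at hg
    have h7 : (2*(k+1) + (k-1)) * (k-1+1) = 3*k*k + k := by
      have h5 : k - 1 + 1 = k := by omega
      have h6 : 2*(k+1) + (k-1) = 3*k + 1 := by omega
      calc (2*(k+1) + (k-1))*(k-1+1) = (3*k+1) * k := by rw [h5, h6]
      _ = 3*k*k + k := by ring
    simp only [id] at hg ⊢
    omega
  refine ⟨?_, hsum, ⟨?_, ?_⟩, ?_⟩
  · intro x hx
    rw [mem_Icc] at hx ⊢
    omega
  · rw [hmnn, hMx]
  · right; rw [hmnn, hMx]; omega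
  · rw [Nat.card_Icc]; omega

lemma sigma0_pentminus {n k : ℕ} (hk : 1 ≤ k) (h : 2*n + k = 3*k*k) :
    sigma0 n = (-1)^k := by
  have hkk : k ≤ k*k := Nat.le_mul_of_pos_left k hk
  have hn : 1 ≤ n := by nlinarith
  obtain ⟨hsub, hsum, hexc, hcard⟩ := E1_facts hk h
  apply sigma0_exc hn _ hsub hsum hexc hcard
  intro B hBsub hBsum hBexc
  obtain ⟨j, hj, hcase⟩ := exc_classify hn hBsub hBsum hBexc
  rcases hcase with ⟨h1, h2⟩ | ⟨h1, h2⟩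
  · have := pent_inj1 hj hk h1 h
    rw [h2, this]
  · exact absurd (pent_inj2 hk hj h h1) (fun x => x)

lemma sigma0_pentplus {n k : ℕ} (hk : 1 ≤ k) (h : 2*n = 3*k*k + k) :
    sigma0 n = (-1)^k := by
  have hkk : k ≤ k*k := Nat.le_mul_of_pos_left k hk
  have hn : 1 ≤ n := by nlinarith
  obtain ⟨hsub, hsum, hexc, hcard⟩ := E2_facts hk h
  apply sigma0_exc hn _ hsub hsum hexc hcard
  intro B hBsub hBsum hBexc
  obtain ⟨j, hj, hcase⟩ := exc_classify hn hBsub hBsum hBexc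
  rcases hcase with ⟨h1, h2⟩ | ⟨h1, h2⟩
  · exact absurd (pent_inj2 hj hk h1 h) (fun x => x)
  · have := pent_inj3 hj hk h1 h
    rw [h2, this]

lemma sigma0_notpent {n : ℕ} (hn : 1 ≤ n)
    (h : ∀ k, 1 ≤ k → 2*n + k ≠ 3*k*k ∧ 2*n ≠ 3*k*k + k) :
    sigma0 n = 0 := by
  apply sigma0_zero' hn
  intro B hBsub hBsum hBexc
  obtain ⟨j, hj, hcase⟩ := exc_classify hn hBsub hBsum hBexc
  rcases hcase with ⟨h1, _⟩ | ⟨h1, _⟩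
  · exact (h j hj).1 h1
  · exact (h j hj).2 h1

lemma interior_nonpent {m k : ℕ} (hm : 1 ≤ m)
    (hcase : (6*k*k < m + k ∧ m < 6*k*k + k) ∨ (6*k*k + k < m ∧ m < 6*k*k + 5*k + 1) ∨
      (6*k*k + 5*k + 1 < m ∧ m < 6*k*k + 7*k + 2) ∨
      (6*k*k + 7*k + 2 < m ∧ m < 6*k*k + 11*k + 5)) :
    sigma0 m = 0 := by
  have key : ∀ a : ℕ, ¬ (m + a = 6*a*a ∨ m = 6*a*a + a ∨ m = 6*a*a + 5*a + 1 ∨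
      m = 6*a*a + 7*a + 2) := by
    intro a hval
    have hL : 6*k*k < m + k := by
      rcases hcase with ⟨h1,_⟩|⟨h1,_⟩|⟨h1,_⟩|⟨h1,_⟩ <;> linarith
    have hR : m < 6*k*k + 11*k + 5 := by
      rcases hcase with ⟨_,h2⟩|⟨_,h2⟩|⟨_,h2⟩|⟨_,h2⟩ <;> linarith
    rcases Nat.lt_trichotomy a k with h | rfl | h
    · have hb : 6*a*a + 7*a + 2 + k ≤ 6*k*k := by
        nlinarith [Nat.mul_le_mul (show a+1 ≤ k by omega) (le_refl k),
          Nat.mul_le_mul (le_refl (a+1)) (show a+1 ≤ k by omega)]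
      have hm' : m ≤ 6*a*a + 7*a + 2 := by
        rcases hval with h'|h'|h'|h' <;> linarith
      linarith
    · rcases hval with h'|h'|h'|h' <;>
        rcases hcase with ⟨h1,h2⟩|⟨h1,h2⟩|⟨h1,h2⟩|⟨h1,h2⟩ <;> linarith
    · have hb : 6*k*k + 11*k + 5 + a ≤ 6*a*a := by
        nlinarith [Nat.mul_le_mul (show k+1 ≤ a by omega) (le_refl a),
          Nat.mul_le_mul (le_refl (k+1)) (show k+1 ≤ a by omega)]
      have hm' : 6*a*a ≤ m + a := by
        rcases hval with h'|h'|h'|h' <;> linarith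
      linarith
  apply sigma0_notpent hm
  intro j hj
  constructor
  · intro hc
    rcases Nat.even_or_odd j with ⟨a, rfl⟩ | ⟨a, rfl⟩
    · have ha : m + a = 6*a*a := by
        have e : 3*(a+a)*(a+a) = 12*(a*a) := by ring
        linarith
      exact key a (Or.inl ha)
    · have ha : m = 6*a*a + 5*a + 1 := by
        have e : 3*(2*a+1)*(2*a+1) = 12*(a*a) + 12*a + 3 := by ring
        linarith
      exact key a (Or.inr (Or.inr (Or.inl ha)))
  · intro hc
    rcases Nat.even_or_odd j with ⟨a, rfl⟩ | ⟨a, rfl⟩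
    · have ha : m = 6*a*a + a := by
        have e : 3*(a+a)*(a+a) = 12*(a*a) := by ring
        linarith
      exact key a (Or.inr (Or.inl ha))
    · have ha : m = 6*a*a + 7*a + 2 := by
        have e : 3*(2*a+1)*(2*a+1) = 12*(a*a) + 12*a + 3 := by ring
        linarith
      exact key a (Or.inr (Or.inr (Or.inr ha)))

lemma js1 {m k : ℕ} (hk : 1 ≤ k) (h : m + k = 6*k*k) : sigma0 m = 1 := by
  have h' : 2*m + 2*k = 3*(2*k)*(2*k) := by
    have e : 3*(2*k)*(2*k) = 12*(k*k) := by ring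
    linarith
  rw [sigma0_pentminus (by omega) h']
  exact Even.neg_one_pow ⟨k, by ring⟩

lemma js2 {m k : ℕ} (hk : 1 ≤ k) (h : m = 6*k*k + k) : sigma0 m = 1 := by
  have h' : 2*m = 3*(2*k)*(2*k) + 2*k := by
    have e : 3*(2*k)*(2*k) = 12*(k*k) := by ring
    linarith
  rw [sigma0_pentplus (by omega) h']
  exact Even.neg_one_pow ⟨k, by ring⟩

lemma js3 {m k : ℕ} (h : m = 6*k*k + 5*k + 1) : sigma0 m = -1 := by
  have h' : 2*m + (2*k+1) = 3*(2*k+1)*(2*k+1) := by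
    have e : 3*(2*k+1)*(2*k+1) = 12*(k*k) + 12*k + 3 := by ring
    linarith
  rw [sigma0_pentminus (by omega) h']
  exact Odd.neg_one_pow ⟨k, by ring⟩

lemma js4 {m k : ℕ} (h : m = 6*k*k + 7*k + 2) : sigma0 m = -1 := by
  have h' : 2*m = 3*(2*k+1)*(2*k+1) + (2*k+1) := by
    have e : 3*(2*k+1)*(2*k+1) = 12*(k*k) + 12*k + 3 := by ring
    linarith
  rw [sigma0_pentplus (by omega) h']
  exact Odd.neg_one_pow ⟨k, by ring⟩

lemma sigma0_zero_eval : sigma0 0 = 1 := by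
  unfold sigma0
  simp

lemma S_zero : S 0 = 1 := by
  unfold S
  simp [sigma0_zero_eval]

lemma S_succ (n : ℕ) : S (n+1) = S n + sigma0 (n+1) := by
  unfold S
  rw [Finset.sum_range_succ]

lemma Skey : ∀ n : ℕ, ∀ k : ℕ,
    ((6*k*k ≤ n + k ∧ n < 6*k*k + k) → S n = 0) ∧
    ((6*k*k + k ≤ n ∧ n < 6*k*k + 5*k + 1) → S n = 1) ∧
    ((6*k*k + 5*k + 1 ≤ n ∧ n < 6*k*k + 7*k + 2) → S n = 0) ∧
    ((6*k*k + 7*k + 2 ≤ n ∧ n < 6*k*k + 11*k + 5) → S n = -1) := by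
  intro n
  induction n with
  | zero =>
    intro k
    have hkk : k ≤ k*k := by
      rcases Nat.eq_zero_or_pos k with rfl | h
      · simp
      · exact Nat.le_mul_of_pos_left k h
    refine ⟨?_, ?_, ?_, ?_⟩
    · rintro ⟨h1, h2⟩
      exfalso
      linarith
    · rintro ⟨h1, h2⟩
      have : k = 0 := by linarith
      exact S_zero
    · rintro ⟨h1, h2⟩
      exfalso
      linarith
    · rintro ⟨h1, h2⟩
      exfalso
      linarith
  | succ n IH =>
    intro k
    have hkk : k ≤ k*k := by
      rcases Nat.eq_zero_or_pos k with rfl | h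
      · simp
      · exact Nat.le_mul_of_pos_left k h
    refine ⟨?_, ?_, ?_, ?_⟩
    · rintro ⟨h1, h2⟩
      have hk1 : 1 ≤ k := by
        by_contra hc
        push_neg at hc
        interval_cases k <;> omega
      rw [S_succ]
      rcases Nat.eq_or_lt_of_le h1 with hb | hb
      · -- boundary : n + 1 + k = 6k²
        obtain ⟨j, rfl⟩ : ∃ j, k = j + 1 := ⟨k-1, by omega⟩
        have e1 : 6*(j+1)*(j+1) = 6*(j*j) + 12*j + 6 := by ring
        have hn : n = 6*(j*j) + 11*j + 4 := by linarith [hb.symm]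
        have hSn : S n = -1 := (IH j).2.2.2 ⟨by linarith, by linarith⟩
        have hsig : sigma0 (n+1) = 1 := js1 hk1 (by linarith [hb.symm])
        rw [hSn, hsig]; ring
      · have hSn : S n = 0 := (IH k).1 ⟨by linarith, by linarith⟩
        have hsig : sigma0 (n+1) = 0 :=
          interior_nonpent (by omega) (Or.inl ⟨by linarith, h2⟩)
        rw [hSn, hsig]; ring
    · rintro ⟨h1, h2⟩
      rw [S_succ]
      rcases Nat.eq_or_lt_of_le h1 with hb | hb
      · have hk1 : 1 ≤ k := by
          by_contra hc
          push_neg at hc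
          interval_cases k <;> omega
        have hSn : S n = 0 := (IH k).1 ⟨by linarith, by linarith⟩
        have hsig : sigma0 (n+1) = 1 := js2 hk1 hb.symm
        rw [hSn, hsig]; ring
      · have hSn : S n = 1 := (IH k).2.1 ⟨by linarith, by linarith⟩
        have hsig : sigma0 (n+1) = 0 :=
          interior_nonpent (by omega) (Or.inr (Or.inl ⟨by linarith, h2⟩))
        rw [hSn, hsig]; ring
    · rintro ⟨h1, h2⟩
      rw [S_succ]
      rcases Nat.eq_or_lt_of_le h1 with hb | hb
      · have hSn : S n = 1 := (IH k).2.1 ⟨by linarith, by linarith⟩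
        have hsig : sigma0 (n+1) = -1 := js3 hb.symm
        rw [hSn, hsig]; ring
      · have hSn : S n = 0 := (IH k).2.2.1 ⟨by linarith, by linarith⟩
        have hsig : sigma0 (n+1) = 0 :=
          interior_nonpent (by omega) (Or.inr (Or.inr (Or.inl ⟨by linarith, h2⟩)))
        rw [hSn, hsig]; ring
    · rintro ⟨h1, h2⟩
      rw [S_succ]
      rcases Nat.eq_or_lt_of_le h1 with hb | hb
      · have hSn : S n = 0 := (IH k).2.2.1 ⟨by linarith, by linarith⟩
        have hsig : sigma0 (n+1) = -1 := js4 hb.symm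
        rw [hSn, hsig]; ring
      · have hSn : S n = -1 := (IH k).2.2.2 ⟨by linarith, by linarith⟩
        have hsig : sigma0 (n+1) = 0 :=
          interior_nonpent (by omega) (Or.inr (Or.inr (Or.inr ⟨by linarith, h2⟩)))
        rw [hSn, hsig]; ring

lemma totality (n : ℕ) : ∃ k : ℕ,
    (6*k*k ≤ n + k ∧ n < 6*k*k + k) ∨ (6*k*k + k ≤ n ∧ n < 6*k*k + 5*k + 1) ∨
    (6*k*k + 5*k + 1 ≤ n ∧ n < 6*k*k + 7*k + 2) ∨
    (6*k*k + 7*k + 2 ≤ n ∧ n < 6*k*k + 11*k + 5) := by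
  set P : ℕ → Prop := fun m => 6*m*m ≤ n + m with hP_def
  have hP0 : P 0 := by simp [hP_def]
  set k := Nat.findGreatest P (n+1) with hk_def
  have hPk : P k := Nat.findGreatest_spec (Nat.zero_le _) hP0
  have hnot : ¬ P (k+1) := by
    rcases Nat.lt_or_ge (k+1) (n+2) with h | h
    · exact Nat.findGreatest_is_greatest (n := n+1) (by omega) (by omega)
    · intro hc
      have : 6*(k+1)*(k+1) ≤ n + (k+1) := hc
      nlinarith [Nat.mul_le_mul (show 1 ≤ k+1 by omega) (le_refl (k+1))]
  have hub : n + k + 1 < 6*k*k + 12*k + 6 := by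
    have e : 6*(k+1)*(k+1) = 6*k*k + 12*k + 6 := by ring
    simp only [hP_def] at hnot
    push_neg at hnot
    linarith [hnot]
  have hlb : 6*k*k ≤ n + k := hPk
  refine ⟨k, ?_⟩
  rcases Nat.lt_or_ge n (6*k*k + k) with c1 | c1
  · exact Or.inl ⟨hlb, c1⟩
  rcases Nat.lt_or_ge n (6*k*k + 5*k + 1) with c2 | c2
  · exact Or.inr (Or.inl ⟨c1, c2⟩)
  rcases Nat.lt_or_ge n (6*k*k + 7*k + 2) with c3 | c3
  · exact Or.inr (Or.inr (Or.inl ⟨c2, c3⟩))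
  · exact Or.inr (Or.inr (Or.inr ⟨c3, by linarith⟩))


end Aux

/-- `S(n) ∈ {-1, 0, 1}` for all `n`, with: `S(n) = 1` on `[6k²+k, 6k²+5k+1)`,
`S(n) = -1` on `[6k²+7k+2, 6k²+11k+5)`, and `S(n) = 0` on `[6k²-k, 6k²+k)` and on
`[6k²+5k+1, 6k²+7k+2)`, for every `k ≥ 0`. -/

theorem stmt14 (n : ℕ) :
    (S n = -1 ∨ S n = 0 ∨ S n = 1) ∧
    (∀ k : ℕ, 6 * k ^ 2 + k ≤ n → n < 6 * k ^ 2 + 5 * k + 1 → S n = 1) ∧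
    (∀ k : ℕ, 6 * k ^ 2 + 7 * k + 2 ≤ n → n < 6 * k ^ 2 + 11 * k + 5 → S n = -1) ∧
    (∀ k : ℕ, (6 * k ^ 2 - k ≤ n ∧ n < 6 * k ^ 2 + k) ∨
        (6 * k ^ 2 + 5 * k + 1 ≤ n ∧ n < 6 * k ^ 2 + 7 * k + 2) → S n = 0) := by
  refine ⟨?_, ?_, ?_, ?_⟩
  · obtain ⟨k, hc⟩ := totality n
    rcases hc with h | h | h | h
    · exact Or.inr (Or.inl ((Skey n k).1 h))
    · exact Or.inr (Or.inr ((Skey n k).2.1 h))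
    · exact Or.inr (Or.inl ((Skey n k).2.2.1 h))
    · exact Or.inl ((Skey n k).2.2.2 h)
  · intro k h1 h2
    rw [pow_two, ← mul_assoc] at h1 h2
    exact (Skey n k).2.1 ⟨h1, h2⟩
  · intro k h1 h2
    rw [pow_two, ← mul_assoc] at h1 h2
    exact (Skey n k).2.2.2 ⟨h1, h2⟩
  · intro k h
    rcases h with ⟨h1, h2⟩ | ⟨h1, h2⟩
    · rw [pow_two, ← mul_assoc] at h1 h2
      rw [Nat.sub_le_iff_le_add] at h1
      exact (Skey n k).1 ⟨h1, h2⟩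
    · rw [pow_two, ← mul_assoc] at h1 h2
      exact (Skey n k).2.2.1 ⟨h1, h2⟩
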